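/- arXiv:1701.01502 — 3 statements merged into one kernel-verified Lean document; each statement's English description precedes it below -/
import Mathlib

section
/- For every σ > 0, the function φ̄(r,t) := 2 arctan( r/(σ e^t) ) + π satisfies ∂ₜφ̄ + r ∂ᵣφ̄ − ∂ᵣᵣφ̄ − (1/r)∂ᵣφ̄ + sin(2φ̄)/(2r²) = 0 for all r > 0 and all t ∈ ℝ; that is, φ̄ is an exact solution of the axisymmetric drift harmonic map heat equation. -/
open Real MeasureTheory Set Filter Topology

/-- Partial derivative in the radial variable `r`. -/
noncomputable def pr (φ : ℝ → ℝ → ℝ) (r t : ℝ) : ℝ := deriv (fun s => φ s t) r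

/-- Second partial derivative in the radial variable `r`. -/
noncomputable def prr (φ : ℝ → ℝ → ℝ) (r t : ℝ) : ℝ :=
  deriv (fun s => deriv (fun s' => φ s' t) s) r

/-- Partial derivative in the time variable `t`. -/
noncomputable def pt (φ : ℝ → ℝ → ℝ) (r t : ℝ) : ℝ := deriv (fun s => φ r s) t

/-- The axisymmetric drift harmonic map heat equation
`∂ₜφ + r ∂ᵣφ = ∂ᵣᵣφ + (1/r)∂ᵣφ − sin(2φ)/(2r²)` at the point `(r,t)`. -/
def SolvesDriftHM (φ : ℝ → ℝ → ℝ) (r t : ℝ) : Prop :=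
  pt φ r t + r * pr φ r t =
    prr φ r t + (1 / r) * pr φ r t - Real.sin (2 * φ r t) / (2 * r ^ 2)

/-- The exact solution `φ̄(r,t) = 2 arctan(r/(σ e^t)) + π`. -/
noncomputable def phibar (σ : ℝ) (r t : ℝ) : ℝ :=
  2 * Real.arctan (r / (σ * Real.exp t)) + Real.pi

lemma radial_hasDerivAt (a : ℝ) (ha : 0 < a) (s : ℝ) :
    HasDerivAt (fun s' : ℝ => 2 * Real.arctan (s' / a) + Real.pi)
      (2 * a / (a ^ 2 + s ^ 2)) s := by
  have h1 : HasDerivAt (fun s' : ℝ => s' / a) (1 / a) s := by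
    simpa using (hasDerivAt_id s).div_const a
  have h2 := (Real.hasDerivAt_arctan (s / a)).comp s h1
  have h3 := (h2.const_mul 2).add_const Real.pi
  refine h3.congr_deriv ?_
  have ha2 : a ^ 2 + s ^ 2 ≠ 0 := by positivity
  field_simp

lemma sin_four_arctan (x : ℝ) :
    Real.sin (4 * Real.arctan x) = 4 * x * (1 - x ^ 2) / (1 + x ^ 2) ^ 2 := by
  have hs : Real.sin (Real.arctan x) = x / Real.sqrt (1 + x ^ 2) := Real.sin_arctan x
  have hc : Real.cos (Real.arctan x) = 1 / Real.sqrt (1 + x ^ 2) := Real.cos_arctan x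
  have hpos : (0:ℝ) < 1 + x ^ 2 := by positivity
  have hsq : Real.sqrt (1 + x ^ 2) ^ 2 = 1 + x ^ 2 := Real.sq_sqrt hpos.le
  have hne : Real.sqrt (1 + x ^ 2) ≠ 0 := by positivity
  have h4 : (4 : ℝ) * Real.arctan x = 2 * (2 * Real.arctan x) := by ring
  rw [h4, Real.sin_two_mul, Real.sin_two_mul, Real.cos_two_mul, hs, hc]
  field_simp
  rw [show Real.sqrt (1 + x ^ 2) ^ 4 = (Real.sqrt (1 + x ^ 2) ^ 2) ^ 2 by ring, hsq]
  ring

/-- For every `σ > 0`, the function `φ̄(r,t) = 2 arctan(r/(σ e^t)) + π` is an exact solution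
of the axisymmetric drift harmonic map heat equation for all `r > 0` and `t ∈ ℝ`. -/
theorem phibar_exact_solution (σ : ℝ) (hσ : 0 < σ) (r t : ℝ) (hr : 0 < r) :
    pt (phibar σ) r t + r * pr (phibar σ) r t - prr (phibar σ) r t
      - (1 / r) * pr (phibar σ) r t
      + Real.sin (2 * phibar σ r t) / (2 * r ^ 2) = 0 := by
  set a : ℝ := σ * Real.exp t with ha_def
  have ha : 0 < a := by positivity
  have haA : ∀ s : ℝ, a ^ 2 + s ^ 2 ≠ 0 := fun s => by positivity
  -- pr
  have hpr : pr (phibar σ) r t = 2 * a / (a ^ 2 + r ^ 2) := by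
    have hf : (fun s => phibar σ s t) = fun s' => 2 * Real.arctan (s' / a) + Real.pi := rfl
    rw [pr, hf, (radial_hasDerivAt a ha r).deriv]
  -- prr
  have hprr : prr (phibar σ) r t = -(4 * a * r) / (a ^ 2 + r ^ 2) ^ 2 := by
    have hinner : (fun s => deriv (fun s' => phibar σ s' t) s)
        = fun s => 2 * a / (a ^ 2 + s ^ 2) := by
      funext s
      have hf : (fun s' => phibar σ s' t) = fun s' => 2 * Real.arctan (s' / a) + Real.pi := rfl
      rw [hf, (radial_hasDerivAt a ha s).deriv]
    have hden : HasDerivAt (fun s : ℝ => a ^ 2 + s ^ 2) (2 * r) r := by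
      simpa using ((hasDerivAt_pow 2 r).const_add (a ^ 2))
    have h : HasDerivAt (fun s : ℝ => 2 * a / (a ^ 2 + s ^ 2))
        ((0 * (a ^ 2 + r ^ 2) - 2 * a * (2 * r)) / (a ^ 2 + r ^ 2) ^ 2) r :=
      (hasDerivAt_const r (2 * a)).div hden (haA r)
    rw [prr, hinner, h.deriv]
    ring
  -- pt
  have hpt : pt (phibar σ) r t = -(2 * r * a) / (a ^ 2 + r ^ 2) := by
    have hden : HasDerivAt (fun s : ℝ => σ * Real.exp s) (σ * Real.exp t) t := by
      simpa using (Real.hasDerivAt_exp t).const_mul σ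
    have hne : σ * Real.exp t ≠ 0 := by positivity
    have hq : HasDerivAt (fun s : ℝ => r / (σ * Real.exp s))
        ((0 * (σ * Real.exp t) - r * (σ * Real.exp t)) / (σ * Real.exp t) ^ 2) t :=
      (hasDerivAt_const t r).div hden hne
    have h2 := (Real.hasDerivAt_arctan (r / (σ * Real.exp t))).comp t hq
    have h3 := (h2.const_mul 2).add_const Real.pi
    have : pt (phibar σ) r t =
        2 * (1 / (1 + (r / (σ * Real.exp t)) ^ 2) *
          ((0 * (σ * Real.exp t) - r * (σ * Real.exp t)) / (σ * Real.exp t) ^ 2)) := by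
      simpa [pt, phibar] using h3.deriv
    rw [this, ← ha_def]
    have h1 : (1 : ℝ) + (r / a) ^ 2 ≠ 0 := by positivity
    field_simp
    ring
  -- sin term
  have hsin : Real.sin (2 * phibar σ r t)
      = 4 * (r / a) * (1 - (r / a) ^ 2) / (1 + (r / a) ^ 2) ^ 2 := by
    have : 2 * phibar σ r t = 4 * Real.arctan (r / a) + 2 * Real.pi := by
      rw [phibar, ← ha_def]; ring
    rw [this, Real.sin_add_two_pi, sin_four_arctan]
  rw [hpr, hprr, hpt, hsin]
  have h1 : (1 : ℝ) + (r / a) ^ 2 ≠ 0 := by positivity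
  field_simp
  ring
end

section
/- Let R > 0 and let f be continuous on [0,R] and continuously differentiable on (0,R] with f(0) = 0 and f(R) = α, and suppose the energy ∫₀^R ( f'(r)² + sin²(f(r))/r² ) r dr is finite. Then ∫₀^R ( f'(r)² + sin²(f(r))/r² ) r dr ≥ 2(1 − cos α). -/
open Real MeasureTheory Set

/-- Lower energy bound: if `f` is continuous on `[0,R]`, continuously differentiable on
`(0,R]`, with `f(0) = 0`, `f(R) = α` and finite axisymmetric energy, then
`∫₀^R (f'² + sin²f/r²) r dr ≥ 2(1 − cos α)`. -/
theorem energy_lower_bound (R α : ℝ) (hR : 0 < R) (f f' : ℝ → ℝ)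
    (hcont : ContinuousOn f (Set.Icc 0 R))
    (hderiv : ∀ r ∈ Set.Ioc (0:ℝ) R, HasDerivWithinAt f (f' r) (Set.Ioc (0:ℝ) R) r)
    (hcont' : ContinuousOn f' (Set.Ioc (0:ℝ) R))
    (h0 : f 0 = 0) (hRα : f R = α)
    (hfin : IntegrableOn (fun r => (f' r ^ 2 + Real.sin (f r) ^ 2 / r ^ 2) * r)
      (Set.Ioo (0:ℝ) R)) :
    2 * (1 - Real.cos α)
      ≤ ∫ r in Set.Ioo (0:ℝ) R, (f' r ^ 2 + Real.sin (f r) ^ 2 / r ^ 2) * r := by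
  set E : ℝ → ℝ := fun r => (f' r ^ 2 + Real.sin (f r) ^ 2 / r ^ 2) * r with hE
  set G : ℝ → ℝ := fun r => 2 * f' r * Real.sin (f r) with hG
  -- pointwise bound |G| ≤ E on Ioo 0 R
  have key : ∀ r ∈ Set.Ioo (0:ℝ) R, |G r| ≤ E r := by
    intro r hr
    have hr0 : (0:ℝ) < r := hr.1
    have habs : |G r| = 2 * |f' r| * |Real.sin (f r)| := by
      rw [hG]
      rw [abs_mul, abs_mul, abs_two]
    rw [← mul_le_mul_iff_of_pos_right hr0, habs]
    have hEr : E r * r = f' r ^ 2 * r ^ 2 + Real.sin (f r) ^ 2 := by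
      rw [hE]; field_simp
    rw [hEr]
    nlinarith [sq_nonneg (|f' r| * r - |Real.sin (f r)|), sq_abs (f' r),
      sq_abs (Real.sin (f r)), abs_nonneg (f' r), abs_nonneg (Real.sin (f r))]
  -- G is integrable on Ioo
  have hGcont : ContinuousOn G (Set.Ioc (0:ℝ) R) := by
    apply ContinuousOn.mul
    · exact (continuousOn_const.mul hcont')
    · exact Real.continuous_sin.comp_continuousOn (hcont.mono Set.Ioc_subset_Icc_self)
  have hGmeas : AEStronglyMeasurable G (volume.restrict (Set.Ioo (0:ℝ) R)) :=
    (hGcont.mono Set.Ioo_subset_Ioc_self).aestronglyMeasurable measurableSet_Ioo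
  have hGint : IntegrableOn G (Set.Ioo (0:ℝ) R) := by
    refine hfin.mono' hGmeas ?_
    filter_upwards [ae_restrict_mem measurableSet_Ioo] with r hr
    exact key r hr
  -- define g = -2 cos ∘ f, with derivative G
  set g : ℝ → ℝ := fun r => -2 * Real.cos (f r) with hg
  have hgcont : ContinuousOn g (Set.Icc 0 R) :=
    continuousOn_const.mul (Real.continuous_cos.comp_continuousOn hcont)
  have hgderiv : ∀ r ∈ Set.Ioo (0:ℝ) R, HasDerivWithinAt g (G r) (Set.Ioi r) r := by
    intro r hr
    have hmem : Set.Ioc (0:ℝ) R ∈ nhds r :=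
      Ioc_mem_nhds hr.1 hr.2
    have hf : HasDerivAt f (f' r) r :=
      (hderiv r ⟨hr.1, hr.2.le⟩).hasDerivAt hmem
    have : HasDerivAt g (G r) r := by
      have := (hf.cos).const_mul (-2 : ℝ)
      refine this.congr_deriv ?_
      rw [hG]; ring
    exact this.hasDerivWithinAt
  have hGII : IntervalIntegrable G volume 0 R := by
    rw [intervalIntegrable_iff_integrableOn_Ioo_of_le hR.le]
    exact hGint
  have hftc : ∫ r in (0:ℝ)..R, G r = g R - g 0 :=
    intervalIntegral.integral_eq_sub_of_hasDeriv_right_of_le hR.le hgcont hgderiv hGII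
  have hval : ∫ r in Set.Ioo (0:ℝ) R, G r = 2 * (1 - Real.cos α) := by
    have h1 : ∫ r in (0:ℝ)..R, G r = ∫ r in Set.Ioc (0:ℝ) R, G r :=
      intervalIntegral.integral_of_le hR.le
    rw [← MeasureTheory.integral_Ioc_eq_integral_Ioo, ← h1, hftc, hg]
    simp [h0, hRα, Real.cos_zero]
    ring
  calc 2 * (1 - Real.cos α) = ∫ r in Set.Ioo (0:ℝ) R, G r := hval.symm
    _ ≤ ∫ r in Set.Ioo (0:ℝ) R, E r := by
        refine MeasureTheory.setIntegral_mono_on hGint hfin measurableSet_Ioo ?_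
        intro r hr
        exact le_trans (le_abs_self _) (key r hr)
end

section
/- Let ε ∈ (0,1), μ > 0, δ > 0, a := 1+ε, λ̄(t) := ( (δ(1−ε)/2)(1 − e^{−2t}) )^{1/(1−ε)}, and ψ(r,t) := 2 arctan( r/(e^t λ̄(t)) ) − 2 arctan( r^{a}/(e^{at} μ) ). Then for all r > 0 and t > 0, ∂ₜψ(r,t) + r ∂ᵣψ(r,t) = − 2 δ r e^{−t} λ̄(t)^{ε} / ( e^{2t} λ̄(t)² + r² ). -/
open Real MeasureTheory Set Filter Topology

/-- The solution `λ̄(t) = ((δ(1−ε)/2)(1 − e^{−2t}))^{1/(1−ε)}` of `λ̄' = δ e^{−2t} λ̄^ε`,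
`λ̄(0) = 0`. -/
noncomputable def lamBar (δ ε : ℝ) (t : ℝ) : ℝ :=
  (δ * (1 - ε) / 2 * (1 - Real.exp (-2 * t))) ^ (1 / (1 - ε))

/-- The function `ψ(r,t) = 2 arctan(r/(e^t λ̄(t))) − 2 arctan(r^{a}/(e^{at} μ))`, `a = 1+ε`. -/
noncomputable def psiSuper (δ ε μ : ℝ) (r t : ℝ) : ℝ :=
  2 * Real.arctan (r / (Real.exp t * lamBar δ ε t))
    - 2 * Real.arctan (r ^ (1 + ε) / (Real.exp ((1 + ε) * t) * μ))

lemma lamBar_base_pos (δ ε : ℝ) (hδ : 0 < δ) (hε : ε ∈ Set.Ioo (0:ℝ) 1) (t : ℝ) (ht : 0 < t) :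
    0 < δ * (1 - ε) / 2 * (1 - Real.exp (-2 * t)) := by
  have h1 : Real.exp (-2 * t) < 1 := by
    rw [Real.exp_lt_one_iff]; linarith
  have hc : 0 < δ * (1 - ε) / 2 := by
    have := hε.2; nlinarith
  nlinarith

lemma lamBar_pos (δ ε : ℝ) (hδ : 0 < δ) (hε : ε ∈ Set.Ioo (0:ℝ) 1) (t : ℝ) (ht : 0 < t) :
    0 < lamBar δ ε t :=
  Real.rpow_pos_of_pos (lamBar_base_pos δ ε hδ hε t ht) _

lemma lamBar_hasDerivAt (δ ε : ℝ) (hδ : 0 < δ) (hε : ε ∈ Set.Ioo (0:ℝ) 1) (t : ℝ) (ht : 0 < t) :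
    HasDerivAt (lamBar δ ε) (δ * Real.exp (-2 * t) * (lamBar δ ε t) ^ ε) t := by
  have hε1 : (0:ℝ) < 1 - ε := by have := hε.2; linarith
  have hb := lamBar_base_pos δ ε hδ hε t ht
  have hinner : HasDerivAt (fun s => δ * (1 - ε) / 2 * (1 - Real.exp (-2 * s)))
      (δ * (1 - ε) / 2 * (Real.exp (-2 * t) * 2)) t := by
    have h1 : HasDerivAt (fun s : ℝ => -2 * s) (-2) t := by
      simpa using (hasDerivAt_id t).const_mul (-2 : ℝ)
    have h4 := (h1.exp.const_sub (1 : ℝ)).const_mul (δ * (1 - ε) / 2)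
    refine h4.congr_deriv ?_
    ring
  have hD := hinner.rpow_const (p := 1 / (1 - ε)) (Or.inl hb.ne')
  have hLε : (lamBar δ ε t) ^ ε
      = (δ * (1 - ε) / 2 * (1 - Real.exp (-2 * t))) ^ (1 / (1 - ε) - 1) := by
    rw [lamBar, ← Real.rpow_mul hb.le]
    congr 1
    field_simp
    ring
  rw [hLε]
  refine hD.congr_deriv ?_
  field_simp

/-- Identity (4.11): the material derivative of `ψ` equals
`∂ₜψ + r ∂ᵣψ = −2δ r e^{−t} λ̄^ε / (e^{2t} λ̄² + r²)` for all `r > 0`, `t > 0`. -/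
theorem psi_material_derivative (δ ε μ : ℝ) (hδ : 0 < δ) (hε : ε ∈ Set.Ioo (0:ℝ) 1)
    (hμ : 0 < μ) (r t : ℝ) (hr : 0 < r) (ht : 0 < t) :
    pt (psiSuper δ ε μ) r t + r * pr (psiSuper δ ε μ) r t
      = -(2 * δ * r * Real.exp (-t) * (lamBar δ ε t) ^ ε)
          / (Real.exp (2 * t) * (lamBar δ ε t) ^ 2 + r ^ 2) := by
  have hL : 0 < lamBar δ ε t := lamBar_pos δ ε hδ hε t ht
  have hlam := lamBar_hasDerivAt δ ε hδ hε t ht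
  set L : ℝ := lamBar δ ε t with hLdef
  set L' : ℝ := δ * Real.exp (-2 * t) * L ^ ε with hL'def
  have hE : 0 < Real.exp t := Real.exp_pos t
  have hA0 : 0 < Real.exp ((1 + ε) * t) := Real.exp_pos _
  have hden1 : Real.exp t * L ≠ 0 := by positivity
  have hden2 : Real.exp ((1 + ε) * t) * μ ≠ 0 := by positivity
  -- time derivative
  have hden1' : HasDerivAt (fun s => Real.exp s * lamBar δ ε s)
      (Real.exp t * L + Real.exp t * L') t := (Real.hasDerivAt_exp t).mul hlam
  have hden2' : HasDerivAt (fun s => Real.exp ((1 + ε) * s) * μ)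
      (Real.exp ((1 + ε) * t) * (1 + ε) * μ) t := by
    have h1 : HasDerivAt (fun s : ℝ => (1 + ε) * s) (1 + ε) t := by
      simpa using (hasDerivAt_id t).const_mul (1 + ε)
    exact h1.exp.mul_const μ
  have hq1 : HasDerivAt (fun s => r / (Real.exp s * lamBar δ ε s))
      ((0 * (Real.exp t * L) - r * (Real.exp t * L + Real.exp t * L')) / (Real.exp t * L) ^ 2)
      t := (hasDerivAt_const t r).div hden1' hden1
  have hq2 : HasDerivAt (fun s => r ^ (1 + ε) / (Real.exp ((1 + ε) * s) * μ))
      ((0 * (Real.exp ((1 + ε) * t) * μ) - r ^ (1 + ε) * (Real.exp ((1 + ε) * t) * (1 + ε) * μ))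
        / (Real.exp ((1 + ε) * t) * μ) ^ 2) t :=
    (hasDerivAt_const t (r ^ (1 + ε))).div hden2' hden2
  have hpt : HasDerivAt (fun s => psiSuper δ ε μ r s)
      (2 * (1 / (1 + (r / (Real.exp t * L)) ^ 2) *
        ((0 * (Real.exp t * L) - r * (Real.exp t * L + Real.exp t * L')) / (Real.exp t * L) ^ 2))
      - 2 * (1 / (1 + (r ^ (1 + ε) / (Real.exp ((1 + ε) * t) * μ)) ^ 2) *
        ((0 * (Real.exp ((1 + ε) * t) * μ)
          - r ^ (1 + ε) * (Real.exp ((1 + ε) * t) * (1 + ε) * μ))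
          / (Real.exp ((1 + ε) * t) * μ) ^ 2))) t := by
    exact (hq1.arctan.const_mul 2).sub (hq2.arctan.const_mul 2)
  -- space derivative
  have hs1 : HasDerivAt (fun s : ℝ => s / (Real.exp t * L)) (1 / (Real.exp t * L)) r := by
    simpa using (hasDerivAt_id r).div_const (Real.exp t * L)
  have hs2 : HasDerivAt (fun s : ℝ => s ^ (1 + ε) / (Real.exp ((1 + ε) * t) * μ))
      ((1 + ε) * r ^ ε / (Real.exp ((1 + ε) * t) * μ)) r := by
    have h1 : HasDerivAt (fun s : ℝ => s ^ (1 + ε)) ((1 + ε) * r ^ ε) r := by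
      have := Real.hasDerivAt_rpow_const (x := r) (p := 1 + ε) (Or.inl hr.ne')
      simpa using this
    exact h1.div_const _
  have hpr : HasDerivAt (fun s => psiSuper δ ε μ s t)
      (2 * (1 / (1 + (r / (Real.exp t * L)) ^ 2) * (1 / (Real.exp t * L)))
      - 2 * (1 / (1 + (r ^ (1 + ε) / (Real.exp ((1 + ε) * t) * μ)) ^ 2) *
          ((1 + ε) * r ^ ε / (Real.exp ((1 + ε) * t) * μ)))) r := by
    exact (hs1.arctan.const_mul 2).sub (hs2.arctan.const_mul 2)
  rw [pt, pr, hpt.deriv, hpr.deriv]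
  -- algebraic identities
  have hP : r ^ (1 + ε) = r * r ^ ε := by
    rw [Real.rpow_add hr, Real.rpow_one]
  have hE2 : Real.exp (2 * t) = Real.exp t * Real.exp t := by
    rw [two_mul, Real.exp_add]
  have hEn : Real.exp (-t) = (Real.exp t)⁻¹ := Real.exp_neg t
  have hEn2 : Real.exp (-2 * t) = (Real.exp t * Real.exp t)⁻¹ := by
    rw [← hE2, ← Real.exp_neg]; ring_nf
  have hsum : 0 < Real.exp (2 * t) * L ^ 2 + r ^ 2 := by positivity
  have hd1 : (0:ℝ) < 1 + (r / (Real.exp t * L)) ^ 2 := by positivity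
  have hd2 : (0:ℝ) < 1 + (r ^ (1 + ε) / (Real.exp ((1 + ε) * t) * μ)) ^ 2 := by positivity
  rw [hL'def, hP, hE2, hEn, hEn2]
  rw [hP] at hd2
  field_simp
  ring
end
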